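/- Let P be a finite set of points in general position (no 3 collinear) that is not of the form 'one point strictly inside the triangle formed by 3 other points with |P| = 4'. Then P can be colored with 3 colors such that every half-plane containing at least 2 points of P contains two points of different colors. -/

import Mathlib

def halfPlane (a b c : ℝ) : Set (ℝ × ℝ) := {p | a * p.1 + b * p.2 ≤ c}

def GenPos (P : Finset (ℝ × ℝ)) : Prop :=
  ∀ p ∈ P, ∀ q ∈ P, ∀ r ∈ P, p ≠ q → p ≠ r → q ≠ r →
    ¬ Collinear ℝ ({p, q, r} : Set (ℝ × ℝ))

namespace Stmt9Aux

open Finset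

abbrev Pt := ℝ × ℝ

/-- the linear functional -/
def L (a b : ℝ) (x : Pt) : ℝ := a * x.1 + b * x.2

lemma L_linear (a b : ℝ) : IsLinearMap ℝ (L a b) := by
  constructor
  · intro x y; simp [L]; ring
  · intro c x; simp [L, Prod.smul_def, smul_eq_mul]; ring

/-- `{p,q}` is cut off from `P` by some open halfplane. -/
def Cut (P : Finset Pt) (p q : Pt) : Prop :=
  p ∈ P ∧ q ∈ P ∧ p ≠ q ∧ ∃ a b : ℝ,
    ∀ r ∈ P, r ≠ p → r ≠ q → L a b p < L a b r ∧ L a b q < L a b r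

lemma Cut.symm {P : Finset Pt} {p q : Pt} (h : Cut P p q) : Cut P q p := by
  obtain ⟨h1, h2, h3, a, b, h4⟩ := h
  exact ⟨h2, h1, h3.symm, a, b, fun r hr hrq hrp => ⟨(h4 r hr hrp hrq).2, (h4 r hr hrp hrq).1⟩⟩

lemma hull_gt {a b M : ℝ} {S : Set Pt} (h : ∀ r ∈ S, M < L a b r) :
    ∀ x ∈ convexHull ℝ S, M < L a b x := by
  intro x hx
  have : convexHull ℝ S ⊆ {y | M < L a b y} :=
    convexHull_min h (convex_halfSpace_gt (L_linear a b) M)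
  exact this hx

lemma hull_le {a b M : ℝ} {S : Set Pt} (h : ∀ r ∈ S, L a b r ≤ M) :
    ∀ x ∈ convexHull ℝ S, L a b x ≤ M := by
  intro x hx
  have : convexHull ℝ S ⊆ {y | L a b y ≤ M} :=
    convexHull_min h (convex_halfSpace_le (L_linear a b) M)
  exact this hx

lemma Cut.no_common {P : Finset Pt} {p q : Pt} (h : Cut P p q) {m : Pt}
    (h1 : m ∈ convexHull ℝ ({p, q} : Set Pt))
    (h2 : m ∈ convexHull ℝ ((↑P : Set Pt) \ {p, q})) : False := by
  obtain ⟨hp, hq, hne, a, b, hab⟩ := h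
  have hle : L a b m ≤ max (L a b p) (L a b q) := by
    refine hull_le ?_ m h1
    rintro r (rfl | rfl)
    · exact le_max_left _ _
    · exact le_max_right _ _
  have hgt : max (L a b p) (L a b q) < L a b m := by
    refine hull_gt ?_ m h2
    rintro r ⟨hrP, hr⟩
    simp only [Set.mem_insert_iff, Set.mem_singleton_iff] at hr
    push_neg at hr
    exact max_lt (hab r hrP hr.1 hr.2).1 (hab r hrP hr.1 hr.2).2
  linarith

lemma Cut.not_mem_left {P : Finset Pt} {p q : Pt} (h : Cut P p q) :
    p ∉ convexHull ℝ ((↑P : Set Pt) \ {p, q}) :=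
  fun hmem => h.no_common (subset_convexHull ℝ _ (by simp)) hmem

/-- every `Cut` pair contains a hull vertex -/
lemma cut_vtx {P : Finset Pt} {p q : Pt} (hcut : Cut P p q)
    (hp : p ∈ convexHull ℝ (↑(P.erase p) : Set Pt))
    (hq : q ∈ convexHull ℝ (↑(P.erase q) : Set Pt)) : False := by
  obtain ⟨hpP, hqP, hne, a, b, hab⟩ := hcut
  set S : Set Pt := (↑P : Set Pt) \ {p, q} with hS
  have hMgt : ∀ r ∈ S, max (L a b p) (L a b q) < L a b r := by
    rintro r ⟨hrP, hr⟩
    simp only [Set.mem_insert_iff, Set.mem_singleton_iff] at hr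
    push_neg at hr
    exact max_lt (hab r hrP hr.1 hr.2).1 (hab r hrP hr.1 hr.2).2
  rcases Set.eq_empty_or_nonempty S with hSe | hSne
  · -- P ⊆ {p,q} : then P.erase p ⊆ {q}
    have hsub : (↑(P.erase p) : Set Pt) ⊆ {q} := by
      intro r hr
      simp only [coe_erase, Set.mem_diff, Set.mem_singleton_iff] at hr ⊢
      by_contra hrq
      exact absurd (Set.eq_empty_iff_forall_notMem.mp hSe r)
        (by exact fun h => h ⟨hr.1, by simp [hr.2, hrq]⟩)
    have := convexHull_mono hsub hp
    rw [convexHull_singleton] at this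
    exact hne this
  · -- main case : get p on a segment
    have hpi : p ∈ convexHull ℝ (insert q S) := by
      refine convexHull_mono ?_ hp
      intro r hr
      simp only [coe_erase, Set.mem_diff, Set.mem_singleton_iff] at hr
      rcases eq_or_ne r q with rfl | hrq
      · exact Set.mem_insert _ _
      · exact Set.mem_insert_of_mem _ ⟨hr.1, by simp [hr.2, hrq]⟩
    have hqi : q ∈ convexHull ℝ (insert p S) := by
      refine convexHull_mono ?_ hq
      intro r hr
      simp only [coe_erase, Set.mem_diff, Set.mem_singleton_iff] at hr
      rcases eq_or_ne r p with rfl | hrp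
      · exact Set.mem_insert _ _
      · exact Set.mem_insert_of_mem _ ⟨hr.1, by simp [hrp, hr.2]⟩
    rw [convexHull_insert hSne] at hpi hqi
    obtain ⟨d, hd, hpd⟩ : ∃ d ∈ convexHull ℝ S, p ∈ segment ℝ q d := by simpa using hpi
    obtain ⟨e, he, hqe⟩ : ∃ e ∈ convexHull ℝ S, q ∈ segment ℝ p e := by simpa using hqi
    obtain ⟨t, u, ht, hu, htu, hp_eq⟩ := hpd
    obtain ⟨t', u', ht', hu', htu', hq_eq⟩ := hqe
    have hLp : L a b p = t * L a b q + u * L a b d := by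
      rw [← hp_eq]; simp [L, Prod.smul_def, smul_eq_mul]; ring
    have hLq : L a b q = t' * L a b p + u' * L a b e := by
      rw [← hq_eq]; simp [L, Prod.smul_def, smul_eq_mul]; ring
    have hLd := hull_gt hMgt d hd
    have hLe := hull_gt hMgt e he
    have hdq : L a b q < L a b d := lt_of_le_of_lt (le_max_right _ _) hLd
    have hep : L a b p < L a b e := lt_of_le_of_lt (le_max_left _ _) hLe
    have ht1 : t = 1 - u := by linarith
    have ht1' : t' = 1 - u' := by linarith
    rw [ht1] at hLp
    rw [ht1'] at hLq
    have h1 : L a b p > L a b q ∨ u = 0 := by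
      rcases eq_or_lt_of_le hu with h | h
      · exact Or.inr h.symm
      · left; nlinarith [mul_pos h (sub_pos.mpr hdq)]
    have h2 : L a b q > L a b p ∨ u' = 0 := by
      rcases eq_or_lt_of_le hu' with h | h
      · exact Or.inr h.symm
      · left; nlinarith [mul_pos h (sub_pos.mpr hep)]
    rcases h1 with h1 | h1
    · rcases h2 with h2 | h2
      · linarith
      · rw [h2] at htu' hq_eq
        have : t' = 1 := by linarith
        rw [this] at hq_eq
        simp at hq_eq
        exact hne hq_eq
    · rw [h1] at htu hp_eq
      have : t = 1 := by linarith
      rw [this] at hp_eq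
      simp at hp_eq
      exact hne hp_eq.symm


lemma exists_eps (R : Finset Pt) (A B : Pt → ℝ)
    (h : ∀ r ∈ R, 0 < A r ∨ (A r = 0 ∧ 0 < B r)) :
    ∃ ε : ℝ, 0 < ε ∧ ∀ δ : ℝ, 0 < δ → δ ≤ ε → ∀ r ∈ R, 0 < A r + δ * B r := by
  classical
  induction R using Finset.induction with
  | empty => exact ⟨1, one_pos, fun δ _ _ r hr => absurd hr (Finset.notMem_empty r)⟩
  | @insert a s ha ih =>
    obtain ⟨ε₀, hε₀, hall⟩ := ih (fun r hr => h r (Finset.mem_insert_of_mem hr))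
    rcases h a (Finset.mem_insert_self a s) with hA | ⟨hA0, hB⟩
    · refine ⟨min ε₀ (A a / (|B a| + 1)), lt_min hε₀ (by positivity), ?_⟩
      intro δ hδ hδle r hr
      rcases Finset.mem_insert.mp hr with rfl | hr
      · have h1 : δ * (|B r| + 1) ≤ A r := by
          rw [← le_div_iff₀ (by positivity)]
          exact hδle.trans (min_le_right _ _)
        have h2 : -(δ * |B r|) ≤ δ * B r := by
          rw [neg_le]
          calc -(δ * B r) = δ * (-B r) := by ring
          _ ≤ δ * |B r| := by
              exact mul_le_mul_of_nonneg_left (neg_le_abs _) hδ.le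
        nlinarith [abs_nonneg (B r)]
      · exact hall δ hδ (hδle.trans (min_le_left _ _)) r hr
    · exact ⟨ε₀, hε₀, fun δ hδ hδle r hr => by
        rcases Finset.mem_insert.mp hr with rfl | hr
        · rw [hA0]; simpa using mul_pos hδ hB
        · exact hall δ hδ hδle r hr⟩

lemma L_inj {a b : ℝ} (hab : ¬(a = 0 ∧ b = 0)) {r s : Pt}
    (h1 : L a b r = L a b s) (h2 : L (-b) a r = L (-b) a s) : r = s := by
  have hpos : 0 < a ^ 2 + b ^ 2 := by
    rcases not_and_or.mp hab with h | h
    · positivity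
    · positivity
  simp only [L] at h1 h2
  have e1 : (a ^ 2 + b ^ 2) * (r.1 - s.1) = 0 := by linear_combination a * h1 - b * h2
  have e2 : (a ^ 2 + b ^ 2) * (r.2 - s.2) = 0 := by linear_combination b * h1 + a * h2
  have : r.1 = s.1 := by
    have := mul_eq_zero.mp e1
    rcases this with h | h
    · linarith
    · linarith
  have h22 : r.2 = s.2 := by
    have := mul_eq_zero.mp e2
    rcases this with h | h
    · linarith
    · linarith
  exact Prod.ext this h22

lemma greedy3 (Adj : Pt → Pt → Prop) [DecidableRel Adj] (hsym : ∀ {x y}, Adj x y → Adj y x) :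
    ∀ S : Finset Pt, (∀ v ∈ S, ((S.erase v).filter (fun w => Adj v w)).card ≤ 2) →
    ∃ f : Pt → Fin 3, ∀ v ∈ S, ∀ w ∈ S, Adj v w → v ≠ w → f v ≠ f w := by
  intro S
  induction S using Finset.strongInduction with
  | _ S ih =>
    intro hdeg
    rcases S.eq_empty_or_nonempty with rfl | hSne
    · exact ⟨fun _ => 0, by simp⟩
    obtain ⟨v, hv⟩ := hSne
    have hsub : ∀ w ∈ S.erase v,
        (((S.erase v).erase w).filter (fun x => Adj w x)) ⊆ ((S.erase w).filter (fun x => Adj w x)) := by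
      intro w _
      exact Finset.filter_subset_filter _ (Finset.erase_subset_erase _ (Finset.erase_subset _ _))
    obtain ⟨f, hf⟩ := ih (S.erase v) (Finset.erase_ssubset hv)
      (fun w hw => le_trans (Finset.card_le_card (hsub w hw)) (hdeg w (Finset.mem_of_mem_erase hw)))
    set F : Finset (Fin 3) := ((S.erase v).filter (fun w => Adj v w)).image f with hF
    have hFcard : F.card ≤ 2 := le_trans Finset.card_image_le (hdeg v hv)
    have hex : ∃ c : Fin 3, c ∉ F := by
      by_contra hall
      push_neg at hall
      have h1 : (Finset.univ : Finset (Fin 3)) ⊆ F := fun c _ => hall c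
      have := Finset.card_le_card h1
      simp [Finset.card_univ] at this
      omega
    obtain ⟨c, hc⟩ := hex
    refine ⟨Function.update f v c, ?_⟩
    intro p hp q hq hadj hne
    rcases eq_or_ne p v with hpv | hpv
    · rcases eq_or_ne q v with hqv | hqv
      · exact absurd (hpv.trans hqv.symm) hne
      · rw [hpv, Function.update_self, Function.update_of_ne hqv]
        intro hcq
        exact hc (hcq ▸ Finset.mem_image_of_mem f (Finset.mem_filter.mpr
          ⟨Finset.mem_erase.mpr ⟨hqv, hq⟩, hpv ▸ hadj⟩))
    · rcases eq_or_ne q v with hqv | hqv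
      · rw [hqv, Function.update_self, Function.update_of_ne hpv]
        intro hcq
        exact hc (hcq ▸ Finset.mem_image_of_mem f (Finset.mem_filter.mpr
          ⟨Finset.mem_erase.mpr ⟨hpv, hp⟩, hsym (hqv ▸ hadj)⟩))
      · rw [Function.update_of_ne hpv, Function.update_of_ne hqv]
        exact hf p (Finset.mem_erase.mpr ⟨hpv, hp⟩) q (Finset.mem_erase.mpr ⟨hqv, hq⟩) hadj hne


def Vtx (P : Finset Pt) (x : Pt) : Prop :=
  x ∈ P ∧ x ∉ convexHull ℝ (↑(P.erase x) : Set Pt)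

lemma radon_case {P : Finset Pt} {v x y z : Pt}
    (hv : Vtx P v) (hx : Vtx P x) (hy : Vtx P y) (hz : Vtx P z)
    (hxy : x ≠ y) (hxz : x ≠ z) (hyz : y ≠ z)
    (cx : Cut P v x) (cy : Cut P v y) (cz : Cut P v z)
    (I : Set (Fin 4)) (h0 : (0 : Fin 4) ∈ I) {m : Pt}
    (hm1 : m ∈ convexHull ℝ (![v,x,y,z] '' I))
    (hm2 : m ∈ convexHull ℝ (![v,x,y,z] '' Iᶜ)) : False := by
  have hvx : v ≠ x := cx.2.2.1
  have hvy : v ≠ y := cy.2.2.1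
  have hvz : v ≠ z := cz.2.2.1
  by_cases h1 : (1 : Fin 4) ∈ I <;> by_cases h2 : (2 : Fin 4) ∈ I <;>
    by_cases h3 : (3 : Fin 4) ∈ I
  · -- all in I : Iᶜ empty
    have hIc : ![v,x,y,z] '' Iᶜ ⊆ ∅ := by
      rintro _ ⟨i, hi, rfl⟩
      fin_cases i <;> simp_all
    have := convexHull_mono hIc hm2
    simp at this
  · -- Iᶜ ⊆ {3} : m = z
    have hsub : ![v,x,y,z] '' Iᶜ ⊆ {z} := by
      rintro _ ⟨i, hi, rfl⟩
      fin_cases i <;> simp_all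
    have hmz : m = z := by
      have := convexHull_mono hsub hm2
      rwa [convexHull_singleton] at this
    have hsub1 : ![v,x,y,z] '' I ⊆ (↑(P.erase z) : Set Pt) := by
      rintro _ ⟨i, hi, rfl⟩
      fin_cases i <;> simp_all [Finset.mem_erase, hvz, hxz, hyz, hv.1, hx.1, hy.1]
    exact hz.2 (hmz ▸ convexHull_mono hsub1 hm1)
  · -- Iᶜ ⊆ {2} : m = y
    have hsub : ![v,x,y,z] '' Iᶜ ⊆ {y} := by
      rintro _ ⟨i, hi, rfl⟩
      fin_cases i <;> simp_all
    have hmy : m = y := by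
      have := convexHull_mono hsub hm2
      rwa [convexHull_singleton] at this
    have hsub1 : ![v,x,y,z] '' I ⊆ (↑(P.erase y) : Set Pt) := by
      rintro _ ⟨i, hi, rfl⟩
      fin_cases i <;> simp_all [Finset.mem_erase, hvy, hxy, hyz.symm, hv.1, hx.1, hz.1]
    exact hy.2 (hmy ▸ convexHull_mono hsub1 hm1)
  · -- I ⊆ {0,1} : Cut v x
    have hsub : ![v,x,y,z] '' I ⊆ ({v, x} : Set Pt) := by
      rintro _ ⟨i, hi, rfl⟩
      fin_cases i <;> simp_all
    have hsub2 : ![v,x,y,z] '' Iᶜ ⊆ ((↑P : Set Pt) \ {v, x}) := by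
      rintro _ ⟨i, hi, rfl⟩
      fin_cases i <;> simp_all [hy.1, hz.1, hvy.symm, hvz.symm, hxy.symm, hxz.symm]
    exact cx.no_common (convexHull_mono hsub hm1) (convexHull_mono hsub2 hm2)
  · -- Iᶜ ⊆ {1} : m = x
    have hsub : ![v,x,y,z] '' Iᶜ ⊆ {x} := by
      rintro _ ⟨i, hi, rfl⟩
      fin_cases i <;> simp_all
    have hmx : m = x := by
      have := convexHull_mono hsub hm2
      rwa [convexHull_singleton] at this
    have hsub1 : ![v,x,y,z] '' I ⊆ (↑(P.erase x) : Set Pt) := by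
      rintro _ ⟨i, hi, rfl⟩
      fin_cases i <;> simp_all [Finset.mem_erase, hvx, hxy.symm, hxz.symm, hv.1, hy.1, hz.1]
    exact hx.2 (hmx ▸ convexHull_mono hsub1 hm1)
  · -- I ⊆ {0,2} : Cut v y
    have hsub : ![v,x,y,z] '' I ⊆ ({v, y} : Set Pt) := by
      rintro _ ⟨i, hi, rfl⟩
      fin_cases i <;> simp_all
    have hsub2 : ![v,x,y,z] '' Iᶜ ⊆ ((↑P : Set Pt) \ {v, y}) := by
      rintro _ ⟨i, hi, rfl⟩
      fin_cases i <;> simp_all [hx.1, hz.1, hvx.symm, hvz.symm, hxy, hyz.symm]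
    exact cy.no_common (convexHull_mono hsub hm1) (convexHull_mono hsub2 hm2)
  · -- I ⊆ {0,3} : Cut v z
    have hsub : ![v,x,y,z] '' I ⊆ ({v, z} : Set Pt) := by
      rintro _ ⟨i, hi, rfl⟩
      fin_cases i <;> simp_all
    have hsub2 : ![v,x,y,z] '' Iᶜ ⊆ ((↑P : Set Pt) \ {v, z}) := by
      rintro _ ⟨i, hi, rfl⟩
      fin_cases i <;> simp_all [hx.1, hy.1, hvx.symm, hvy.symm, hxz, hyz]
    exact cz.no_common (convexHull_mono hsub hm1) (convexHull_mono hsub2 hm2)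
  · -- I ⊆ {0} : m = v
    have hsub : ![v,x,y,z] '' I ⊆ {v} := by
      rintro _ ⟨i, hi, rfl⟩
      fin_cases i <;> simp_all
    have hmv : m = v := by
      have := convexHull_mono hsub hm1
      rwa [convexHull_singleton] at this
    have hsub2 : ![v,x,y,z] '' Iᶜ ⊆ (↑(P.erase v) : Set Pt) := by
      rintro _ ⟨i, hi, rfl⟩
      fin_cases i <;> simp_all [Finset.mem_erase, hvx.symm, hvy.symm, hvz.symm, hx.1, hy.1, hz.1]
    exact hv.2 (hmv ▸ convexHull_mono hsub2 hm2)

lemma finrank_pt : Module.finrank ℝ Pt = 2 := by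
  simp [Module.finrank_prod]

lemma v_degree {P : Finset Pt} {v x y z : Pt}
    (hv : Vtx P v) (hx : Vtx P x) (hy : Vtx P y) (hz : Vtx P z)
    (hxy : x ≠ y) (hxz : x ≠ z) (hyz : y ≠ z)
    (cx : Cut P v x) (cy : Cut P v y) (cz : Cut P v z) : False := by
  have hdep : ¬ AffineIndependent ℝ ![v, x, y, z] := by
    intro h
    have hcard := h.card_le_finrank_succ
    have hle : Module.finrank ℝ (vectorSpan ℝ (Set.range ![v, x, y, z])) ≤ Module.finrank ℝ Pt :=
      Submodule.finrank_le _
    rw [finrank_pt] at hle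
    simp [Fintype.card_fin] at hcard
    omega
  obtain ⟨I, m, hm⟩ := Convex.radon_partition hdep
  by_cases h0 : (0 : Fin 4) ∈ I
  · exact radon_case hv hx hy hz hxy hxz hyz cx cy cz I h0 hm.1 hm.2
  · exact radon_case hv hx hy hz hxy hxz hyz cx cy cz Iᶜ (by simpa using h0) hm.2
      (by rw [compl_compl]; exact hm.1)

lemma drop_max {x y z r q : Pt} {a b c al be ga : ℝ}
    (ha : 0 < a) (hb : 0 < b) (hc : 0 < c)
    (hq : q = a • x + b • y + c • z) (hr : r = al • x + be • y + ga • z)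
    (hsum : a + b + c = 1) (hsum2 : al + be + ga = 1)
    (h1 : be * a ≤ al * b) (h2 : ga * a ≤ al * c) :
    q ∈ convexHull ℝ ({r, y, z} : Set Pt) := by
  have hal : 0 < al := by nlinarith
  have hsumw : ![a, al * b - a * be, al * c - a * ga] 0 +
      (![a, al * b - a * be, al * c - a * ga] 1 + ![a, al * b - a * be, al * c - a * ga] 2) = al := by
    simp; nlinarith [hsum2]
  have hmem := Finset.centerMass_mem_convexHull (Finset.univ : Finset (Fin 3))
    (w := ![a, al * b - a * be, al * c - a * ga]) (z := ![r, y, z])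
    (by intro i _; fin_cases i <;> simp <;> nlinarith)
    (by rw [Fin.sum_univ_three]; simp at hsumw ⊢; nlinarith)
    (s := ({r, y, z} : Set Pt)) (by intro i _; fin_cases i <;> simp)
  convert hmem using 1
  rw [Finset.centerMass, Fin.sum_univ_three, Fin.sum_univ_three]
  simp only [Matrix.cons_val_zero, Matrix.cons_val_one, Matrix.head_cons, Matrix.cons_val_two,
    Matrix.tail_cons]
  have hsum' : a + (al * b - a * be) + (al * c - a * ga) = al := by nlinarith [hsum2]
  rw [hsum', eq_inv_smul_iff₀ hal.ne', hq, hr]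
  module

lemma w_degree {P : Finset Pt} (hP : GenPos P)
    (hexc : ¬(P.card = 4 ∧ ∃ p ∈ P,
      p ∈ interior (convexHull ℝ (↑(P.erase p) : Set (ℝ × ℝ)))))
    {q x y z : Pt} (hq : q ∈ P) (hqW : q ∈ convexHull ℝ (↑(P.erase q) : Set Pt))
    (hxy : x ≠ y) (hxz : x ≠ z) (hyz : y ≠ z)
    (cx : Cut P q x) (cy : Cut P q y) (cz : Cut P q z) : False := by
  classical
  have hqx : q ≠ x := cx.2.2.1
  have hqy : q ≠ y := cy.2.2.1
  have hqz : q ≠ z := cz.2.2.1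
  have hxP : x ∈ P := cx.2.1
  have hyP : y ∈ P := cy.2.1
  have hzP : z ∈ P := cz.2.1
  have hnx : q ∉ convexHull ℝ ((↑P : Set Pt) \ {q, x}) := cx.not_mem_left
  have hny : q ∉ convexHull ℝ ((↑P : Set Pt) \ {q, y}) := cy.not_mem_left
  have hnz : q ∉ convexHull ℝ ((↑P : Set Pt) \ {q, z}) := cz.not_mem_left
  -- Caratheodory
  rw [convexHull_eq_union] at hqW
  obtain ⟨t, hAI, hts, hqt⟩ : ∃ t : Finset Pt, AffineIndependent ℝ ((↑) : t → Pt) ∧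
      (↑t : Set Pt) ⊆ (↑P : Set Pt) \ {q} ∧ q ∈ convexHull ℝ (↑t : Set Pt) := by
    simpa using hqW
  have hts' : (↑t : Set Pt) ⊆ (↑(P.erase q) : Set Pt) := by
    intro s hs
    have := hts hs
    simp only [Set.mem_diff, Set.mem_singleton_iff, Finset.mem_coe] at this
    simp only [Finset.coe_erase, Set.mem_diff, Set.mem_singleton_iff, Finset.mem_coe]
    exact this
  have hmem_t : ∀ w : Pt, q ≠ w → Cut P q w →
      q ∉ convexHull ℝ ((↑P : Set Pt) \ {q, w}) → w ∈ t := by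
    intro w hqw hcw hn
    by_contra hw
    refine hn (convexHull_mono ?_ hqt)
    intro s hs
    have hs' := hts' hs
    simp only [Finset.coe_erase, Set.mem_diff, Set.mem_singleton_iff, Finset.mem_coe] at hs' ⊢
    refine ⟨hs'.1, ?_⟩
    simp only [Set.mem_insert_iff, Set.mem_singleton_iff]
    push_neg
    exact ⟨hs'.2, fun h => hw (h ▸ hs)⟩
  have hxt : x ∈ t := hmem_t x hqx cx hnx
  have hyt : y ∈ t := hmem_t y hqy cy hny
  have hzt : z ∈ t := hmem_t z hqz cz hnz
  have hcard_t : t.card ≤ 3 := by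
    have hcard := hAI.card_le_finrank_succ
    have hle : Module.finrank ℝ (vectorSpan ℝ (Set.range ((↑) : t → Pt))) ≤ Module.finrank ℝ Pt :=
      Submodule.finrank_le _
    rw [finrank_pt] at hle
    simp only [Fintype.card_coe] at hcard
    omega
  have hcard3 : ({x, y, z} : Finset Pt).card = 3 := by
    rw [Finset.card_insert_of_notMem (by simp [hxy, hxz]),
      Finset.card_insert_of_notMem (by simp [hyz]), Finset.card_singleton]
  have ht_eq : ({x, y, z} : Finset Pt) = t := by
    apply Finset.eq_of_subset_of_card_le
    · intro s hs
      simp only [Finset.mem_insert, Finset.mem_singleton] at hs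
      rcases hs with rfl | rfl | rfl <;> assumption
    · omega
  have hq3 : q ∈ convexHull ℝ (↑({x, y, z} : Finset Pt) : Set Pt) := by
    rw [ht_eq]; exact hqt
  rw [Finset.convexHull_eq] at hq3
  obtain ⟨w, hw0, hw1, hwc⟩ := hq3
  have hxnm : x ∉ ({y, z} : Finset Pt) := by simp [hxy, hxz]
  have hynm : y ∉ ({z} : Finset Pt) := by simp [hyz]
  have hw1' : w x + w y + w z = 1 := by
    rw [Finset.sum_insert hxnm, Finset.sum_insert hynm, Finset.sum_singleton] at hw1
    linarith
  have hq_eq : q = w x • x + w y • y + w z • z := by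
    rw [Finset.centerMass_eq_of_sum_1 _ _ hw1, Finset.sum_insert hxnm, Finset.sum_insert hynm,
      Finset.sum_singleton] at hwc
    rw [← hwc]; simp [add_assoc]
  -- positivity of weights
  have hcollin : ∀ u v : Pt, u ∈ P → v ∈ P → q ≠ u → q ≠ v → u ≠ v →
      q ∈ segment ℝ u v → False := by
    intro u v huP hvP hqu hqv huv hseg
    have : Collinear ℝ ({q, u, v} : Set Pt) := by
      apply collinear_insert_of_mem_affineSpan_pair
      exact (convexHull_subset_affineSpan _) (by rw [convexHull_pair]; exact hseg)
    exact hP q hq u huP v hvP hqu hqv huv this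
  have hwx : 0 < w x := by
    rcases (hw0 x (by simp)).lt_or_eq with h | h
    · exact h
    · exfalso
      refine hcollin y z hyP hzP hqy hqz hyz ⟨w y, w z, hw0 y (by simp), hw0 z (by simp),
        by linarith, ?_⟩
      rw [hq_eq, ← h]; simp
  have hwy : 0 < w y := by
    rcases (hw0 y (by simp)).lt_or_eq with h | h
    · exact h
    · exfalso
      refine hcollin x z hxP hzP hqx hqz hxz ⟨w x, w z, hw0 x (by simp), hw0 z (by simp),
        by linarith, ?_⟩
      rw [hq_eq, ← h]; simp
  have hwz : 0 < w z := by
    rcases (hw0 z (by simp)).lt_or_eq with h | h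
    · exact h
    · exfalso
      refine hcollin x y hxP hyP hqx hqy hxy ⟨w x, w y, hw0 x (by simp), hw0 y (by simp),
        by linarith, ?_⟩
      rw [hq_eq, ← h]; simp
  -- affine independence and span
  have hAI3 : AffineIndependent ℝ ![x, y, z] :=
    affineIndependent_iff_not_collinear_set.mpr (hP x hxP y hyP z hzP hxy hxz hyz)
  have htop : affineSpan ℝ (Set.range ![x, y, z]) = ⊤ := by
    rw [AffineIndependent.affineSpan_eq_top_iff_card_eq_finrank_add_one hAI3]
    simp [finrank_pt]
  by_cases hall : ∀ r ∈ P, r = q ∨ r = x ∨ r = y ∨ r = z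
  · -- exceptional configuration
    have hPeq : P = ({q, x, y, z} : Finset Pt) := by
      apply Finset.Subset.antisymm
      · intro s hs
        rcases hall s hs with rfl | rfl | rfl | rfl <;> simp
      · intro s hs
        simp only [Finset.mem_insert, Finset.mem_singleton] at hs
        rcases hs with rfl | rfl | rfl | rfl <;> assumption
    have hcard4 : P.card = 4 := by
      rw [hPeq, Finset.card_insert_of_notMem (by simp [hqx, hqy, hqz]),
        Finset.card_insert_of_notMem (by simp [hxy, hxz]),
        Finset.card_insert_of_notMem (by simp [hyz]), Finset.card_singleton]
    refine hexc ⟨hcard4, q, hq, ?_⟩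
    have herase : P.erase q = ({x, y, z} : Finset Pt) := by
      rw [hPeq]
      exact Finset.erase_insert (by simp [hqx, hqy, hqz])
    rw [herase]
    let B : AffineBasis (Fin 3) ℝ Pt := ⟨![x, y, z], hAI3, htop⟩
    have hBfun : (B : Fin 3 → Pt) = ![x, y, z] := rfl
    have hBrange : Set.range (B : Fin 3 → Pt) = (↑({x, y, z} : Finset Pt) : Set Pt) := by
      rw [hBfun]
      ext p
      constructor
      · rintro ⟨i, rfl⟩
        fin_cases i <;> simp
      · intro hp
        simp only [Finset.coe_insert, Set.mem_insert_iff, Finset.coe_singleton,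
          Set.mem_singleton_iff] at hp
        rcases hp with rfl | rfl | rfl
        · exact ⟨0, rfl⟩
        · exact ⟨1, rfl⟩
        · exact ⟨2, rfl⟩
    rw [← hBrange, AffineBasis.interior_convexHull]
    have hsumW : ∑ i, (![w x, w y, w z] : Fin 3 → ℝ) i = 1 := by
      rw [Fin.sum_univ_three]
      simpa using hw1'
    have hcombo : q = Finset.univ.affineCombination ℝ (B : Fin 3 → Pt) ![w x, w y, w z] := by
      rw [hBfun, Finset.affineCombination_eq_linear_combination _ _ _ hsumW, Fin.sum_univ_three]
      simpa using hq_eq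
    intro i
    have := B.coord_apply_combination_of_mem (Finset.mem_univ i) hsumW
    rw [hcombo, this]
    fin_cases i
    · simpa using hwx
    · simpa using hwy
    · simpa using hwz
  · push_neg at hall
    obtain ⟨r, hrP, hrq, hrx, hry, hrz⟩ := hall
    have hrmem : r ∈ affineSpan ℝ (Set.range ![x, y, z]) := by rw [htop]; trivial
    obtain ⟨w', hw'1, hw'c⟩ := eq_affineCombination_of_mem_affineSpan_of_fintype hrmem
    rw [Finset.affineCombination_eq_linear_combination _ _ _ hw'1] at hw'c
    rw [Fin.sum_univ_three] at hw'c hw'1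
    simp only [Matrix.cons_val_zero, Matrix.cons_val_one, Matrix.head_cons, Matrix.cons_val_two,
      Matrix.tail_cons] at hw'c hw'1
    set a := w x; set b := w y; set c := w z
    set al := w' 0; set be := w' 1; set ga := w' 2
    have hdone : ∀ u v s : Pt, q ∈ convexHull ℝ ({r, u, v} : Set Pt) → u ∈ P → v ∈ P →
        u ≠ q → v ≠ q → u ≠ s → v ≠ s → r ≠ s →
        q ∉ convexHull ℝ ((↑P : Set Pt) \ {q, s}) → False := by
      intro u v s hmem huP hvP huq hvq hus hvs hrs hn
      refine hn (convexHull_mono ?_ hmem)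
      intro o ho
      simp only [Set.mem_insert_iff, Set.mem_singleton_iff] at ho
      have hkey : o ∈ P ∧ o ≠ q ∧ o ≠ s := by
        rcases ho with rfl | rfl | rfl
        · exact ⟨hrP, hrq, hrs⟩
        · exact ⟨huP, huq, hus⟩
        · exact ⟨hvP, hvq, hvs⟩
      refine ⟨hkey.1, ?_⟩
      simp only [Set.mem_insert_iff, Set.mem_singleton_iff]
      push_neg
      exact hkey.2
    rcases le_total (be / b) (al / a) with h1 | h1
    · rcases le_total (ga / c) (al / a) with h2 | h2
      · -- drop x
        have hd := drop_max hwx hwy hwz hq_eq hw'c hw1' hw'1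
          ((div_le_div_iff₀ hwy hwx).mp h1) ((div_le_div_iff₀ hwz hwx).mp h2)
        exact hdone y z x hd hyP hzP hqy.symm hqz.symm hxy.symm hxz.symm hrx hnx
      · -- drop z : al/a ≤ ga/c and be/b ≤ ga/c
        have h3 : be / b ≤ ga / c := h1.trans h2
        have hd := drop_max hwz hwx hwy
          (show q = c • z + a • x + b • y by rw [hq_eq]; module)
          (show r = ga • z + al • x + be • y by rw [hw'c]; module)
          (by linarith) (by linarith)
          ((div_le_div_iff₀ hwx hwz).mp h2) ((div_le_div_iff₀ hwy hwz).mp h3)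
        exact hdone x y z hd hxP hyP hqx.symm hqy.symm hxz hyz hrz hnz
    · rcases le_total (ga / c) (be / b) with h2 | h2
      · -- drop y
        have hd := drop_max hwy hwx hwz
          (show q = b • y + a • x + c • z by rw [hq_eq]; module)
          (show r = be • y + al • x + ga • z by rw [hw'c]; module)
          (by linarith) (by linarith)
          ((div_le_div_iff₀ hwx hwy).mp h1) ((div_le_div_iff₀ hwz hwy).mp h2)
        exact hdone x z y hd hxP hzP hqx.symm hqz.symm hxy hyz.symm hry hny
      · -- drop z
        have h3 : al / a ≤ ga / c := h1.trans h2
        have hd := drop_max hwz hwx hwy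
          (show q = c • z + a • x + b • y by rw [hq_eq]; module)
          (show r = ga • z + al • x + be • y by rw [hw'c]; module)
          (by linarith) (by linarith)
          ((div_le_div_iff₀ hwx hwz).mp h3) ((div_le_div_iff₀ hwy hwz).mp h2)
        exact hdone x y z hd hxP hyP hqx.symm hqy.symm hxz hyz hrz hnz

lemma three_mem (F : Finset Pt) (hF : 3 ≤ F.card) :
    ∃ x ∈ F, ∃ y ∈ F, ∃ z ∈ F, x ≠ y ∧ x ≠ z ∧ y ≠ z := by
  obtain ⟨x, hx⟩ := Finset.card_pos.mp (show 0 < F.card by omega)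
  obtain ⟨y, hy⟩ := Finset.card_pos.mp (show 0 < (F.erase x).card by
    rw [Finset.card_erase_of_mem hx]; omega)
  obtain ⟨z, hz⟩ := Finset.card_pos.mp (show 0 < ((F.erase x).erase y).card by
    rw [Finset.card_erase_of_mem hy, Finset.card_erase_of_mem hx]; omega)
  refine ⟨x, hx, y, Finset.mem_of_mem_erase hy,
    z, Finset.mem_of_mem_erase (Finset.mem_of_mem_erase hz), ?_, ?_, ?_⟩
  · exact ((Finset.mem_erase.mp hy).1).symm
  · exact ((Finset.mem_erase.mp (Finset.mem_of_mem_erase hz)).1).symm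
  · exact ((Finset.mem_erase.mp hz).1).symm

lemma exists_coloring (P : Finset Pt) (hP : GenPos P)
    (hexc : ¬(P.card = 4 ∧ ∃ p ∈ P,
      p ∈ interior (convexHull ℝ (↑(P.erase p) : Set (ℝ × ℝ))))) :
    ∃ f : Pt → Fin 3, ∀ p q : Pt, Cut P p q → f p ≠ f q := by
  classical
  set V : Finset Pt := P.filter (fun x => x ∉ convexHull ℝ (↑(P.erase x) : Set Pt)) with hV
  have hVtx : ∀ v ∈ V, Vtx P v := by
    intro v hv
    rw [hV, Finset.mem_filter] at hv
    exact ⟨hv.1, hv.2⟩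
  have hdegV : ∀ v ∈ V, ((V.erase v).filter (fun w => Cut P v w)).card ≤ 2 := by
    intro v hv
    by_contra hgt
    push_neg at hgt
    obtain ⟨x, hx, y, hy, z, hz, hxy, hxz, hyz⟩ := three_mem _ hgt
    rw [Finset.mem_filter] at hx hy hz
    exact v_degree (hVtx v hv) (hVtx x (Finset.mem_of_mem_erase hx.1))
      (hVtx y (Finset.mem_of_mem_erase hy.1)) (hVtx z (Finset.mem_of_mem_erase hz.1))
      hxy hxz hyz hx.2 hy.2 hz.2
  obtain ⟨f₀, hf₀⟩ := greedy3 (Cut P) (fun h => h.symm) V hdegV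
  have hdegW : ∀ q ∈ P, q ∈ convexHull ℝ (↑(P.erase q) : Set Pt) →
      ((P.filter (fun r => Cut P q r)).card ≤ 2) := by
    intro q hq hqconv
    by_contra hgt
    push_neg at hgt
    obtain ⟨x, hx, y, hy, z, hz, hxy, hxz, hyz⟩ := three_mem _ hgt
    rw [Finset.mem_filter] at hx hy hz
    exact w_degree hP hexc hq hqconv hxy hxz hyz hx.2 hy.2 hz.2
  set F : Pt → Finset (Fin 3) := fun q => (P.filter (fun r => Cut P q r)).image f₀ with hFdef
  have hexW : ∀ q ∈ P, q ∉ V → ∃ c : Fin 3, c ∉ F q := by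
    intro q hq hqV
    have hqconv : q ∈ convexHull ℝ (↑(P.erase q) : Set Pt) := by
      rw [hV, Finset.mem_filter] at hqV
      push_neg at hqV
      exact hqV hq
    have hFq : (F q).card ≤ 2 := le_trans Finset.card_image_le (hdegW q hq hqconv)
    by_contra hall
    push_neg at hall
    have h1 : (Finset.univ : Finset (Fin 3)) ⊆ F q := fun c _ => hall c
    have := Finset.card_le_card h1
    simp [Finset.card_univ] at this
    omega
  set f : Pt → Fin 3 := fun p =>
    if p ∈ V then f₀ p else if h : ∃ c : Fin 3, c ∉ F p then h.choose else 0 with hfdef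
  refine ⟨f, ?_⟩
  intro p q hcut
  have hpP : p ∈ P := hcut.1
  have hqP : q ∈ P := hcut.2.1
  have hne : p ≠ q := hcut.2.2.1
  by_cases hpV : p ∈ V <;> by_cases hqV : q ∈ V
  · have := hf₀ p hpV q hqV hcut hne
    simpa [hfdef, hpV, hqV] using this
  · have hex := hexW q hqP hqV
    have hfq : f q = hex.choose := by simp [hfdef, hqV, dif_pos hex]
    have hfp : f p = f₀ p := by simp [hfdef, hpV]
    have hmem : f₀ p ∈ F q :=
      Finset.mem_image_of_mem f₀ (Finset.mem_filter.mpr ⟨hpP, hcut.symm⟩)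
    rw [hfp, hfq]
    intro heq
    exact hex.choose_spec (heq ▸ hmem)
  · have hex := hexW p hpP hpV
    have hfp : f p = hex.choose := by simp [hfdef, hpV, dif_pos hex]
    have hfq : f q = f₀ q := by simp [hfdef, hqV]
    have hmem : f₀ q ∈ F p :=
      Finset.mem_image_of_mem f₀ (Finset.mem_filter.mpr ⟨hqP, hcut⟩)
    rw [hfp, hfq]
    intro heq
    exact hex.choose_spec (heq ▸ hmem)
  · exfalso
    have hpconv : p ∈ convexHull ℝ (↑(P.erase p) : Set Pt) := by
      rw [hV, Finset.mem_filter] at hpV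
      push_neg at hpV
      exact hpV hpP
    have hqconv : q ∈ convexHull ℝ (↑(P.erase q) : Set Pt) := by
      rw [hV, Finset.mem_filter] at hqV
      push_neg at hqV
      exact hqV hqP
    exact cut_vtx hcut hpconv hqconv

end Stmt9Aux

theorem stmt9 (P : Finset (ℝ × ℝ)) (hP : GenPos P)
    (hexc : ¬ (P.card = 4 ∧ ∃ p ∈ P,
      p ∈ interior (convexHull ℝ (↑(P.erase p) : Set (ℝ × ℝ))))) :
    ∃ f : ℝ × ℝ → Fin 3, ∀ a b c : ℝ, (a, b) ≠ ((0 : ℝ), (0 : ℝ)) →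
      2 ≤ (halfPlane a b c ∩ ↑P).ncard →
      ∃ p ∈ P, ∃ q ∈ P, p ∈ halfPlane a b c ∧ q ∈ halfPlane a b c ∧ f p ≠ f q := by
  classical
  obtain ⟨f, hf⟩ := Stmt9Aux.exists_coloring P hP hexc
  refine ⟨f, ?_⟩
  intro a b c hab hcard
  have hab' : ¬(a = 0 ∧ b = 0) := by
    rintro ⟨rfl, rfl⟩
    exact hab rfl
  set ℓ : Stmt9Aux.Pt → ℝ := Stmt9Aux.L a b with hℓ
  set ℓ' : Stmt9Aux.Pt → ℝ := Stmt9Aux.L (-b) a with hℓ'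
  have hfin : (halfPlane a b c ∩ ↑P).Finite :=
    Set.Finite.subset P.finite_toSet Set.inter_subset_right
  obtain ⟨s₁, s₂, hs₁, hs₂, hss⟩ := (Set.one_lt_ncard_iff hfin).mp (by omega)
  have hs₁P : s₁ ∈ P := hs₁.2
  have hs₂P : s₂ ∈ P := hs₂.2
  have hs₁H : ℓ s₁ ≤ c := hs₁.1
  have hs₂H : ℓ s₂ ≤ c := hs₂.1
  obtain ⟨p, hpP, hpmin⟩ :=
    Finset.exists_min_image P (fun x => toLex (ℓ x, ℓ' x)) ⟨s₁, hs₁P⟩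
  have lex_le : ∀ u v : Stmt9Aux.Pt, toLex (ℓ u, ℓ' u) ≤ toLex (ℓ v, ℓ' v) → ℓ u ≤ ℓ v := by
    intro u v h
    rcases Prod.Lex.toLex_le_toLex.mp h with h | ⟨h1, _⟩
    · exact le_of_lt h
    · exact le_of_eq h1
  set t : Stmt9Aux.Pt := if s₁ = p then s₂ else s₁ with htdef
  have ht : t ∈ P.erase p ∧ ℓ t ≤ c := by
    rw [htdef]
    split_ifs with h
    · exact ⟨Finset.mem_erase.mpr ⟨fun he => hss (he ▸ h ▸ rfl), hs₂P⟩, hs₂H⟩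
    · exact ⟨Finset.mem_erase.mpr ⟨h, hs₁P⟩, hs₁H⟩
  obtain ⟨q, hqP', hqmin⟩ :=
    Finset.exists_min_image (P.erase p) (fun x => toLex (ℓ x, ℓ' x)) ⟨t, ht.1⟩
  have hqP : q ∈ P := Finset.mem_of_mem_erase hqP'
  have hpq : p ≠ q := fun h => (Finset.mem_erase.mp hqP').1 h.symm
  have hpH : ℓ p ≤ c := le_trans (lex_le p s₁ (hpmin s₁ hs₁P)) hs₁H
  have hqH : ℓ q ≤ c := le_trans (lex_le q t (hqmin t ht.1)) ht.2
  have key1 : ∀ r ∈ (P.erase p).erase q,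
      0 < ℓ r - ℓ q ∨ (ℓ r - ℓ q = 0 ∧ 0 < ℓ' r - ℓ' q) := by
    intro r hr
    have h := hqmin r (Finset.mem_of_mem_erase hr)
    rcases Prod.Lex.toLex_le_toLex.mp h with h | ⟨h1, h2⟩
    · left; simp only at h; linarith
    · simp only at h1 h2
      rcases lt_or_eq_of_le h2 with h3 | h3
      · right; exact ⟨by linarith, by linarith⟩
      · exact absurd (Stmt9Aux.L_inj hab' h1.symm h3.symm) (Finset.mem_erase.mp hr).1
  have key2 : ∀ r ∈ (P.erase p).erase q,
      0 < ℓ r - ℓ p ∨ (ℓ r - ℓ p = 0 ∧ 0 < ℓ' r - ℓ' p) := by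
    intro r hr
    have hrP : r ∈ P := Finset.mem_of_mem_erase (Finset.mem_of_mem_erase hr)
    have h := hpmin r hrP
    rcases Prod.Lex.toLex_le_toLex.mp h with h | ⟨h1, h2⟩
    · left; simp only at h; linarith
    · simp only at h1 h2
      rcases lt_or_eq_of_le h2 with h3 | h3
      · right; exact ⟨by linarith, by linarith⟩
      · exact absurd (Stmt9Aux.L_inj hab' h1.symm h3.symm)
          (Finset.mem_erase.mp (Finset.mem_of_mem_erase hr)).1
  obtain ⟨ε₁, hε₁, h₁⟩ := Stmt9Aux.exists_eps ((P.erase p).erase q)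
    (fun r => ℓ r - ℓ q) (fun r => ℓ' r - ℓ' q) key1
  obtain ⟨ε₂, hε₂, h₂⟩ := Stmt9Aux.exists_eps ((P.erase p).erase q)
    (fun r => ℓ r - ℓ p) (fun r => ℓ' r - ℓ' p) key2
  set ε : ℝ := min ε₁ ε₂ with hεdef
  have hε : 0 < ε := lt_min hε₁ hε₂
  have hcut : Stmt9Aux.Cut P p q := by
    refine ⟨hpP, hqP, hpq, a - ε * b, b + ε * a, ?_⟩
    intro r hr hrp hrq
    have hrm : r ∈ (P.erase p).erase q := by
      rw [Finset.mem_erase, Finset.mem_erase]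
      exact ⟨hrq, hrp, hr⟩
    have k1 := h₁ ε hε (min_le_left _ _) r hrm
    have k2 := h₂ ε hε (min_le_right _ _) r hrm
    simp only [hℓ, hℓ', Stmt9Aux.L] at k1 k2
    constructor
    · show (a - ε * b) * p.1 + (b + ε * a) * p.2 < (a - ε * b) * r.1 + (b + ε * a) * r.2
      nlinarith [k2]
    · show (a - ε * b) * q.1 + (b + ε * a) * q.2 < (a - ε * b) * r.1 + (b + ε * a) * r.2
      nlinarith [k1]
  exact ⟨p, hpP, q, hqP, hpH, hqH, hf p q hcut⟩
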